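/- For every integer j ≥ 1, the sum of the absolute values of cos(hπ/(j+1)) for h = 1 to j equals cot(π/(2j+2)) − 1 if j is odd, and csc(π/(2j+2)) − 1 if j is even. -/

import Mathlib

open Real Finset

private lemma telescope_cos (θ : ℝ) (m : ℕ) :
    (∑ h ∈ Finset.Icc 1 m, Real.cos (h * θ)) * (2 * Real.sin (θ / 2)) =
      Real.sin (((m : ℝ) + 1 / 2) * θ) - Real.sin (θ / 2) := by
  induction m with
  | zero =>
    rw [show ((0 : ℕ) : ℝ) + 1 / 2 = 1 / 2 by norm_num,
      show (1 / 2 : ℝ) * θ = θ / 2 by ring]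
    simp
  | succ n ih =>
    rw [Finset.sum_Icc_succ_top (by omega), add_mul, ih]
    have h1 : ((n : ℝ) + 1 + 1 / 2) * θ = ((n : ℝ) + 1) * θ + θ / 2 := by ring
    have h2 : ((n : ℝ) + 1 / 2) * θ = ((n : ℝ) + 1) * θ - θ / 2 := by ring
    push_cast
    rw [h1, h2, Real.sin_add, Real.sin_sub]
    ring

set_option maxHeartbeats 1600000 in
theorem sum_abs_cos_eq (j : ℕ) (hj : 1 ≤ j) :
    (Odd j → ∑ h ∈ Finset.Icc 1 j, |Real.cos (h * π / (j + 1))| =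
      Real.cot (π / (2 * j + 2)) - 1) ∧
    (Even j → ∑ h ∈ Finset.Icc 1 j, |Real.cos (h * π / (j + 1))| =
      1 / Real.sin (π / (2 * j + 2)) - 1) := by
  have hπ := Real.pi_pos
  have hj1 : (0 : ℝ) < (j : ℝ) + 1 := by positivity
  set θ : ℝ := π / ((j : ℝ) + 1) with hθdef
  have hθpos : 0 < θ := by positivity
  have hnθ : ((j : ℝ) + 1) * θ = π := by
    rw [hθdef]; field_simp
  have h2le : (2 : ℝ) ≤ (j : ℝ) + 1 := by
    have : (1 : ℝ) ≤ (j : ℝ) := by exact_mod_cast hj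
    linarith
  have hθle : θ ≤ π / 2 := by
    rw [hθdef]
    rw [div_le_div_iff₀ hj1 two_pos]
    nlinarith
  have hs : 0 < Real.sin (θ / 2) :=
    Real.sin_pos_of_pos_of_lt_pi (by positivity) (by linarith)
  have hcosnn : ∀ h : ℕ, 2 * h ≤ j + 1 → 0 ≤ Real.cos ((h : ℝ) * θ) := by
    intro h hh
    apply Real.cos_nonneg_of_mem_Icc
    constructor
    · have : 0 ≤ (h : ℝ) * θ := by positivity
      linarith
    · have h' : (2 : ℝ) * h ≤ (j : ℝ) + 1 := by exact_mod_cast hh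
      nlinarith [mul_le_mul_of_nonneg_right h' hθpos.le]
  set m := j / 2 with hmdef
  have hmle : m ≤ j := Nat.div_le_self j 2
  have hIoc : ∀ n : ℕ, Finset.Icc 1 n = Finset.Ioc 0 n := by
    intro n; ext x; simp [Finset.mem_Icc, Finset.mem_Ioc]; omega
  have hhalf : π / (2 * (j : ℝ) + 2) = θ / 2 := by
    rw [hθdef, div_div]
    congr 1
    ring
  have hsplit : (∑ h ∈ Finset.Icc 1 j, |Real.cos ((h : ℝ) * π / ((j : ℝ) + 1))|) =
      (∑ h ∈ Finset.Icc 1 m, Real.cos ((h : ℝ) * θ)) +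
        ∑ h ∈ Finset.Icc 1 (j - m), Real.cos ((h : ℝ) * θ) := by
    have eabs : ∀ h ∈ Finset.Icc 1 j,
        |Real.cos ((h : ℝ) * π / ((j : ℝ) + 1))| = |Real.cos ((h : ℝ) * θ)| := by
      intro h _
      rw [hθdef, mul_div_assoc]
    rw [Finset.sum_congr rfl eabs, hIoc j,
      ← Finset.sum_Ioc_consecutive _ (Nat.zero_le m) hmle]
    congr 1
    · rw [hIoc m]
      apply Finset.sum_congr rfl
      intro h hh
      simp only [Finset.mem_Ioc] at hh
      exact abs_of_nonneg (hcosnn h (by omega))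
    · have hre : (∑ h ∈ Finset.Ioc m j, |Real.cos ((h : ℝ) * θ)|) =
          ∑ k ∈ Finset.Ioc 0 (j - m), |Real.cos ((k : ℝ) * θ)| := by
        apply Finset.sum_nbij' (i := fun h => j + 1 - h) (j := fun k => j + 1 - k)
        · intro a ha; simp only [Finset.mem_Ioc] at *; omega
        · intro a ha; simp only [Finset.mem_Ioc] at *; omega
        · intro a ha; simp only [Finset.mem_Ioc] at ha; omega
        · intro a ha; simp only [Finset.mem_Ioc] at ha; omega
        · intro a ha
          simp only [Finset.mem_Ioc] at ha
          have hcast : ((j + 1 - a : ℕ) : ℝ) = (j : ℝ) + 1 - (a : ℝ) := by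
            have h1 : a ≤ j + 1 := by omega
            push_cast [h1]
            ring
          rw [hcast]
          have : ((j : ℝ) + 1 - (a : ℝ)) * θ = π - (a : ℝ) * θ := by
            rw [← hnθ]; ring
          rw [this, Real.cos_pi_sub, abs_neg]
      rw [hre, ← hIoc (j - m)]
      apply Finset.sum_congr rfl
      intro h hh
      simp only [Finset.mem_Icc] at hh
      exact abs_of_nonneg (hcosnn h (by omega))
  constructor
  · rintro ⟨k, hk⟩
    have hmk : m = k := by omega
    have hjm : j - m = k + 1 := by omega
    rw [hsplit, hjm, hmk]
    rw [Finset.sum_Icc_succ_top (by omega)]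
    have hjr : (j : ℝ) = 2 * (k : ℝ) + 1 := by exact_mod_cast hk
    rw [hjr] at hnθ
    have hhalfθ : ((k : ℝ) + 1) * θ = π / 2 := by nlinarith
    have hc0 : Real.cos (((k + 1 : ℕ) : ℝ) * θ) = 0 := by
      push_cast
      rw [hhalfθ, Real.cos_pi_div_two]
    have ht := telescope_cos θ k
    have hsinv : Real.sin (((k : ℝ) + 1 / 2) * θ) = Real.cos (θ / 2) := by
      have h1 : ((k : ℝ) + 1 / 2) * θ = π / 2 - θ / 2 := by nlinarith
      rw [h1, Real.sin_pi_div_two_sub]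
    rw [hsinv] at ht
    rw [hhalf, Real.cot_eq_cos_div_sin, hc0]
    field_simp
    simp only [show ∀ x : ℕ, Real.cos (θ * x) = Real.cos (x * θ) from fun x => by rw [mul_comm]]
    nlinarith [ht]
  · rintro ⟨k, hk⟩
    have hmk : m = k := by omega
    have hjm : j - m = k := by omega
    rw [hsplit, hjm, hmk]
    have hjr : (j : ℝ) = 2 * (k : ℝ) := by rw [hk]; push_cast; ring
    rw [hjr] at hnθ
    have ht := telescope_cos θ k
    have hsinv : Real.sin (((k : ℝ) + 1 / 2) * θ) = 1 := by
      have h1 : ((k : ℝ) + 1 / 2) * θ = π / 2 := by nlinarith [hnθ]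
      rw [h1, Real.sin_pi_div_two]
    rw [hsinv] at ht
    rw [hhalf]
    field_simp
    simp only [show ∀ x : ℕ, Real.cos (θ * x) = Real.cos (x * θ) from fun x => by rw [mul_comm]]
    nlinarith [ht]
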